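/- Let (A,P), (A,Q) ∈ ℰ^N with A ≠ ∅ and (A,P) ⊒ (A,Q) (same first component). Then the interval [(A,Q),(A,P)] in ℰ^N is isomorphic to the interval [Q^{A^c}, P^{A^c}] in the lattice of partitions of A^c = N∖A, and consequently the Möbius function satisfies μ_{ℰ^N}((A,Q),(A,P)) = μ_{𝒫^{A^c}}(Q^{A^c}, P^{A^c}). -/

import Mathlib

open scoped BigOperators

/-- `modp n A` is the modular partition `P^A_⊥` of `Fin n` whose unique (possibly)
non-singleton block is `A`, all other blocks being singletons. -/
def modp (n : ℕ) (A : Set (Fin n)) : Setoid (Fin n) where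
  r x y := x = y ∨ (x ∈ A ∧ y ∈ A)
  iseqv := by
    refine ⟨fun _ => Or.inl rfl, ?_, ?_⟩
    · rintro x y (rfl | ⟨hx, hy⟩)
      · exact Or.inl rfl
      · exact Or.inr ⟨hy, hx⟩
    · rintro x y z (rfl | ⟨hx, hy⟩) h
      · exact h
      · rcases h with rfl | ⟨hy', hz⟩
        · exact Or.inr ⟨hx, hy⟩
        · exact Or.inr ⟨hx, hz⟩

/-- The product `X^N = 2^N × 𝒫^N` of the subset lattice and the partition lattice,
ordered componentwise. -/
abbrev XN (n : ℕ) := Set (Fin n) × Setoid (Fin n)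

/-- The closure operator `cl` on `X^N`:  `cl(∅,P) = (∅,P)` and, for `A ≠ ∅`,
`cl(A,P) = (Ā, P ⊔ P^A_⊥)` where `Ā` is the block of `P ⊔ P^A_⊥` containing `A`. -/
def EmbClosure (n : ℕ) (x : XN n) : XN n :=
  ({y | ∃ a ∈ x.1, (x.2 ⊔ modp n x.1) y a}, x.2 ⊔ modp n x.1)

/-- An embedded subset is a pair that coincides with its closure. -/
def IsEmbedded (n : ℕ) (x : XN n) : Prop := EmbClosure n x = x

/-- The lattice `ℰ^N` of embedded subsets, with the induced order. -/
abbrev Emb (n : ℕ) := {x : XN n // IsEmbedded n x}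

lemma modp_le_of_subsingleton {n : ℕ} {A : Set (Fin n)} (h : A.Subsingleton)
    (Q : Setoid (Fin n)) : modp n A ≤ Q := by
  rw [Setoid.le_def]
  intro x y hxy
  rcases hxy with rfl | ⟨hx, hy⟩
  · exact Q.refl' x
  · obtain rfl := h hx hy
    exact Q.refl' x

lemma modp_eq_bot_of_subsingleton {n : ℕ} {A : Set (Fin n)} (h : A.Subsingleton) :
    modp n A = ⊥ :=
  le_antisymm (modp_le_of_subsingleton h ⊥) bot_le

lemma embedded_empty (n : ℕ) (Q : Setoid (Fin n)) : IsEmbedded n (∅, Q) := by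
  unfold IsEmbedded EmbClosure
  refine Prod.ext ?_ ?_
  · simp
  · simpa using sup_eq_left.mpr (modp_le_of_subsingleton Set.subsingleton_empty Q)

lemma embedded_univ_top (n : ℕ) : IsEmbedded n (Set.univ, ⊤) := by
  unfold IsEmbedded EmbClosure
  refine Prod.ext ?_ ?_
  · ext y
    simp only [Set.mem_setOf_eq, Set.mem_univ, iff_true]
    exact ⟨y, trivial, Setoid.refl' _ y⟩
  · exact sup_eq_left.mpr le_top

lemma embedded_singleton (n : ℕ) (i : Fin n) : IsEmbedded n ({i}, ⊥) := by
  have hb : modp n ({i} : Set (Fin n)) = ⊥ :=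
    modp_eq_bot_of_subsingleton Set.subsingleton_singleton
  unfold IsEmbedded EmbClosure
  refine Prod.ext ?_ ?_
  · ext y
    simp only [Set.mem_setOf_eq, hb, sup_idem, Set.mem_singleton_iff]
    constructor
    · rintro ⟨a, ha, hrel⟩
      subst ha
      change ((⊥ : Setoid (Fin n)) ⊔ modp n {a}) y a at hrel
      rw [modp_eq_bot_of_subsingleton Set.subsingleton_singleton, sup_idem] at hrel
      first
        | simpa [Setoid.bot_def] using hrel
        | exact Setoid.bot_def ▸ hrel
        | exact hrel
    · rintro rfl
      exact ⟨y, rfl, Setoid.refl' _ y⟩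
  · simp [hb]

/-- The bottom element `(∅, P_⊥)` of `ℰ^N`. -/
def botE (n : ℕ) : Emb n := ⟨(∅, ⊥), embedded_empty n ⊥⟩

/-- The top element `(N, P^⊤)` of `ℰ^N`. -/
def topE (n : ℕ) : Emb n := ⟨(Set.univ, ⊤), embedded_univ_top n⟩

/-- The atom `({i}, P_⊥)` of `ℰ^N`. -/
def atomS (n : ℕ) (i : Fin n) : Emb n := ⟨({i}, ⊥), embedded_singleton n i⟩

/-- The atom `(∅, [ij])` of `ℰ^N`, where `[ij]` is the atom of the partition lattice
whose unique non-singleton block is the pair `{i, j}`. -/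
def atomP (n : ℕ) (i j : Fin n) : Emb n := ⟨(∅, modp n {i, j}), embedded_empty n _⟩

/-- A pair is an atom candidate: of the form `({i},P_⊥)` or `(∅,[ij])` with `i ≠ j`. -/
def IsAtomPair (n : ℕ) (a : XN n) : Prop :=
  (∃ i : Fin n, a = ({i}, ⊥)) ∨ ∃ i j : Fin n, i ≠ j ∧ a = (∅, modp n {i, j})

/-- The number of blocks `|P|` of a partition. -/
noncomputable def numBlocks {α : Type*} (P : Setoid α) : ℕ := P.classes.ncard

/-- The rank function `r(A,P) = (n − |P|) + min{|A|,1}` of `ℰ^N`. -/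
noncomputable def erank (n : ℕ) (x : XN n) : ℕ := (n - numBlocks x.2) + min x.1.ncard 1

/-- The partition `Q^S` of `S` induced by a partition `Q` of `N`. -/
def indPart {n : ℕ} (S : Set (Fin n)) (Q : Setoid (Fin n)) : Setoid S :=
  Setoid.comap Subtype.val Q

/-- `mu` is the Möbius function of the (finite) poset `α`. -/
def IsMobius {α : Type*} [PartialOrder α] (mu : α → α → ℤ) : Prop :=
  (∀ x, mu x x = 1) ∧
  (∀ x y, ¬x ≤ y → mu x y = 0) ∧
  (∀ x y, x < y → mu x y = -∑ᶠ z ∈ Set.Ico x y, mu x z)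


instance finiteSetoid (α : Type*) [Finite α] : Finite (Setoid α) :=
  Finite.of_injective (fun s : Setoid α => s.r)
    (fun a b h => Setoid.ext fun x y => by rw [show a.r = b.r from h])

open Classical in
lemma mobius_eq_of_orderIso {α β : Type*} [PartialOrder α] [PartialOrder β]
    [Finite α] (mu1 : α → α → ℤ) (mu2 : β → β → ℤ)
    (h1 : IsMobius mu1) (h2 : IsMobius mu2) {x y : α} {u v : β}
    (hxy : x ≤ y) (huv : u ≤ v)
    (e : Set.Icc x y ≃o Set.Icc u v) :
    mu1 x y = mu2 u v := by
  have hbot : (e ⟨x, le_rfl, hxy⟩ : β) = u := by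
    have h1' : (⟨u, le_rfl, huv⟩ : Set.Icc u v) ≤ e ⟨x, le_rfl, hxy⟩ :=
      (e ⟨x, le_rfl, hxy⟩).2.1
    have h2' : e ⟨x, le_rfl, hxy⟩ ≤ ⟨u, le_rfl, huv⟩ := by
      rw [← e.apply_symm_apply ⟨u, le_rfl, huv⟩]
      exact e.monotone (e.symm ⟨u, le_rfl, huv⟩).2.1
    exact congrArg Subtype.val (le_antisymm h2' h1')
  have htop : (e ⟨y, hxy, le_rfl⟩ : β) = v := by
    have h1' : e ⟨y, hxy, le_rfl⟩ ≤ ⟨v, huv, le_rfl⟩ := (e ⟨y, hxy, le_rfl⟩).2.2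
    have h2' : (⟨v, huv, le_rfl⟩ : Set.Icc u v) ≤ e ⟨y, hxy, le_rfl⟩ := by
      rw [← e.apply_symm_apply ⟨v, huv, le_rfl⟩]
      exact e.monotone (e.symm ⟨v, huv, le_rfl⟩).2.2
    exact congrArg Subtype.val (le_antisymm h1' h2')
  have key : ∀ z : α, ∀ hz : z ∈ Set.Icc x y, mu1 x z = mu2 u (e ⟨z, hz⟩ : β) := by
    intro z
    induction z using (wellFounded_lt (α := α)).induction with
    | _ z IH =>
    intro hz
    rcases eq_or_lt_of_le hz.1 with heq | hlt
    · have hze : (⟨z, hz⟩ : Set.Icc x y) = ⟨x, le_rfl, hxy⟩ := Subtype.ext heq.symm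
      rw [hze, hbot, h2.1, ← heq, h1.1]
    · have hltsub : (⟨x, le_rfl, hxy⟩ : Set.Icc x y) < ⟨z, hz⟩ := Subtype.mk_lt_mk.mpr hlt
      have hue : u < (e ⟨z, hz⟩ : β) := by
        have h3 := Subtype.coe_lt_coe.mpr (e.strictMono hltsub)
        rwa [hbot] at h3
      rw [h1.2.2 x z hlt, h2.2.2 u _ hue]
      congr 1
      refine finsum_mem_eq_of_bijOn
        (fun w => if h : w ∈ Set.Icc x y then (e ⟨w, h⟩ : β) else u) ⟨?_, ?_, ?_⟩ ?_
      · rintro w ⟨hw1, hw2⟩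
        have hwm : w ∈ Set.Icc x y := ⟨hw1, le_trans hw2.le hz.2⟩
        simp only [dif_pos hwm]
        constructor
        · have h3 := Subtype.coe_le_coe.mpr (e.monotone (Subtype.mk_le_mk.mpr hw1 :
            (⟨x, le_rfl, hxy⟩ : Set.Icc x y) ≤ ⟨w, hwm⟩))
          rwa [hbot] at h3
        · exact Subtype.coe_lt_coe.mpr (e.strictMono (Subtype.mk_lt_mk.mpr hw2))
      · rintro w ⟨hw1, hw2⟩ w' ⟨hw1', hw2'⟩ hww
        have hwm : w ∈ Set.Icc x y := ⟨hw1, le_trans hw2.le hz.2⟩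
        have hwm' : w' ∈ Set.Icc x y := ⟨hw1', le_trans hw2'.le hz.2⟩
        simp only [dif_pos hwm, dif_pos hwm'] at hww
        exact congrArg Subtype.val (e.injective (Subtype.ext hww))
      · rintro w' ⟨hw1', hw2'⟩
        have hw'm : w' ∈ Set.Icc u v := ⟨hw1', le_trans hw2'.le (e ⟨z, hz⟩).2.2⟩
        set c := e.symm ⟨w', hw'm⟩ with hc
        have hcz : (c : α) < z := by
          have h3 : e c < e ⟨z, hz⟩ := by
            rw [hc, e.apply_symm_apply]
            exact Subtype.mk_lt_mk.mpr hw2'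
          exact Subtype.coe_lt_coe.mpr (e.lt_iff_lt.mp h3)
        refine ⟨(c : α), ⟨c.2.1, hcz⟩, ?_⟩
        simp only [dif_pos c.2]
        show ((e ⟨(c : α), c.2⟩ : Set.Icc u v) : β) = w'
        rw [show (⟨(c : α), c.2⟩ : Set.Icc x y) = c from rfl, hc, e.apply_symm_apply]
      · rintro w ⟨hw1, hw2⟩
        have hwm : w ∈ Set.Icc x y := ⟨hw1, le_trans hw2.le hz.2⟩
        simp only [dif_pos hwm]
        exact IH w hw2 hwm
  have h4 := key y ⟨hxy, le_rfl⟩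
  rwa [htop] at h4

lemma isEmbedded_iff' {n : ℕ} {A : Set (Fin n)} {R : Setoid (Fin n)} :
    IsEmbedded n (A, R) ↔
      (∀ x ∈ A, ∀ y ∈ A, R x y) ∧ (∀ x y, R x y → x ∈ A → y ∈ A) := by
  constructor
  · intro h
    have hsnd : R ⊔ modp n A = R := congrArg Prod.snd h
    have hmod : modp n A ≤ R := sup_eq_left.mp hsnd
    have hfst : {y | ∃ a ∈ A, (R ⊔ modp n A) y a} = A := congrArg Prod.fst h
    rw [hsnd] at hfst
    refine ⟨fun x hx y hy => Setoid.le_def.mp hmod (Or.inr ⟨hx, hy⟩), fun x y hxy hx => ?_⟩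
    rw [← hfst]
    exact ⟨x, hx, R.symm' hxy⟩
  · rintro ⟨h1, h2⟩
    have hmod : modp n A ≤ R := by
      rw [Setoid.le_def]
      rintro x y (rfl | ⟨hx, hy⟩)
      · exact R.refl' x
      · exact h1 x hx y hy
    have hsnd : R ⊔ modp n A = R := sup_eq_left.mpr hmod
    unfold IsEmbedded EmbClosure
    refine Prod.ext ?_ hsnd
    show {y | ∃ a ∈ A, (R ⊔ modp n A) y a} = A
    rw [hsnd]
    ext y
    constructor
    · rintro ⟨a, ha, hya⟩
      exact h2 a y (R.symm' hya) ha
    · intro hy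
      exact ⟨y, hy, R.refl' y⟩

def extSetoid {n : ℕ} (A : Set (Fin n)) (S : Setoid ↥Aᶜ) : Setoid (Fin n) where
  r x y := (x ∈ A ∧ y ∈ A) ∨ ∃ hx : x ∈ Aᶜ, ∃ hy : y ∈ Aᶜ, S ⟨x, hx⟩ ⟨y, hy⟩
  iseqv := by
    refine ⟨fun x => ?_, ?_, ?_⟩
    · by_cases hx : x ∈ A
      · exact Or.inl ⟨hx, hx⟩
      · exact Or.inr ⟨hx, hx, S.refl' _⟩
    · rintro x y (⟨hx, hy⟩ | ⟨hx, hy, hS⟩)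
      · exact Or.inl ⟨hy, hx⟩
      · exact Or.inr ⟨hy, hx, S.symm' hS⟩
    · rintro x y z (⟨hx, hy⟩ | ⟨hx, hy, hS⟩) (⟨hy', hz⟩ | ⟨hy', hz, hS'⟩)
      · exact Or.inl ⟨hx, hz⟩
      · exact absurd hy hy'
      · exact absurd hy' hy
      · exact Or.inr ⟨hx, hz, S.trans' hS hS'⟩

lemma extSetoid_rel {n : ℕ} {A : Set (Fin n)} {S : Setoid ↥Aᶜ} {x y : Fin n} :
    extSetoid A S x y ↔
      (x ∈ A ∧ y ∈ A) ∨ ∃ hx : x ∈ Aᶜ, ∃ hy : y ∈ Aᶜ, S ⟨x, hx⟩ ⟨y, hy⟩ := Iff.rfl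

lemma indPart_mono {n : ℕ} (S : Set (Fin n)) {R R' : Setoid (Fin n)} (h : R ≤ R') :
    indPart S R ≤ indPart S R' := by
  rw [Setoid.le_def]
  intro x y hxy
  rw [indPart, Setoid.comap_rel] at *
  exact Setoid.le_def.mp h hxy

lemma ext_indPart {n : ℕ} {A : Set (Fin n)} {R : Setoid (Fin n)}
    (h1 : ∀ x ∈ A, ∀ y ∈ A, R x y)
    (h2 : ∀ x y, R x y → x ∈ A → y ∈ A) :
    extSetoid A (indPart Aᶜ R) = R := by
  refine Setoid.ext fun a b => ?_
  rw [extSetoid_rel]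
  constructor
  · rintro (⟨ha, hb⟩ | ⟨ha, hb, hS⟩)
    · exact h1 a ha b hb
    · exact (Setoid.comap_rel _ _ _ _).mp hS
  · intro hab
    by_cases ha : a ∈ A
    · exact Or.inl ⟨ha, h2 a b hab ha⟩
    · have hb : b ∉ A := fun hb => ha (h2 b a (R.symm' hab) hb)
      exact Or.inr ⟨ha, hb, (Setoid.comap_rel _ _ _ _).mpr hab⟩

lemma indPart_ext {n : ℕ} {A : Set (Fin n)} (S : Setoid ↥Aᶜ) :
    indPart Aᶜ (extSetoid A S) = S := by
  refine Setoid.ext fun a b => ?_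
  rw [indPart, Setoid.comap_rel, extSetoid_rel]
  constructor
  · rintro (⟨ha, _⟩ | ⟨ha, hb, hS⟩)
    · exact absurd ha a.2
    · exact hS
  · intro h
    exact Or.inr ⟨a.2, b.2, h⟩

theorem interval_same_subset (n : ℕ) (hn : 1 ≤ n) (A : Set (Fin n)) (hA : A ≠ ∅)
    (P Q : Setoid (Fin n)) (hP : IsEmbedded n (A, P)) (hQ : IsEmbedded n (A, Q))
    (hle : ((A, Q) : XN n) ≤ (A, P)) :
    Nonempty ({z : Emb n // (⟨(A, Q), hQ⟩ : Emb n) ≤ z ∧ z ≤ ⟨(A, P), hP⟩} ≃o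
        Set.Icc (indPart Aᶜ Q) (indPart Aᶜ P)) ∧
    ∀ (mu1 : Emb n → Emb n → ℤ) (mu2 : Setoid ↥Aᶜ → Setoid ↥Aᶜ → ℤ),
      IsMobius mu1 → IsMobius mu2 →
      mu1 ⟨(A, Q), hQ⟩ ⟨(A, P), hP⟩ = mu2 (indPart Aᶜ Q) (indPart Aᶜ P) := by
  obtain ⟨hP1, hP2⟩ := isEmbedded_iff'.mp hP
  obtain ⟨hQ1, hQ2⟩ := isEmbedded_iff'.mp hQ
  have hQP : Q ≤ P := (Prod.le_def.mp hle).2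
  -- block properties for interval elements
  have hfst : ∀ z : Emb n, (⟨(A, Q), hQ⟩ : Emb n) ≤ z → z ≤ ⟨(A, P), hP⟩ →
      z.val.1 = A := fun z h1 h2 =>
    subset_antisymm (Prod.le_def.mp (Subtype.coe_le_coe.mpr h2)).1
      (Prod.le_def.mp (Subtype.coe_le_coe.mpr h1)).1
  have hblock : ∀ z : Emb n, (⟨(A, Q), hQ⟩ : Emb n) ≤ z → z ≤ ⟨(A, P), hP⟩ →
      (∀ x ∈ A, ∀ y ∈ A, z.val.2 x y) ∧ (∀ x y, z.val.2 x y → x ∈ A → y ∈ A) := by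
    intro z h1 h2
    have he : IsEmbedded n (z.val.1, z.val.2) := z.2
    rw [hfst z h1 h2] at he
    exact isEmbedded_iff'.mp he
  -- extension is embedded
  have hemb : ∀ S : Setoid ↥Aᶜ, IsEmbedded n (A, extSetoid A S) := by
    intro S
    refine isEmbedded_iff'.mpr ⟨fun x hx y hy => Or.inl ⟨hx, hy⟩, ?_⟩
    rintro x y (⟨_, h2⟩ | ⟨h1, _, _⟩) hx
    · exact h2
    · exact absurd hx h1
  have hlo : ∀ S : Setoid ↥Aᶜ, indPart Aᶜ Q ≤ S → Q ≤ extSetoid A S := by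
    intro S hS
    rw [Setoid.le_def]
    intro x y hxy
    by_cases hx : x ∈ A
    · exact Or.inl ⟨hx, hQ2 x y hxy hx⟩
    · have hy : y ∉ A := fun hy => hx (hQ2 y x (Q.symm' hxy) hy)
      exact Or.inr ⟨hx, hy, Setoid.le_def.mp hS ((Setoid.comap_rel _ _ _ _).mpr hxy)⟩
  have hhi : ∀ S : Setoid ↥Aᶜ, S ≤ indPart Aᶜ P → extSetoid A S ≤ P := by
    intro S hS
    rw [Setoid.le_def]
    rintro x y (⟨hx, hy⟩ | ⟨hx, hy, h⟩)
    · exact hP1 x hx y hy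
    · exact (Setoid.comap_rel _ _ _ _).mp (Setoid.le_def.mp hS h)
  let E : {z : Emb n // (⟨(A, Q), hQ⟩ : Emb n) ≤ z ∧ z ≤ ⟨(A, P), hP⟩} ≃o
      Set.Icc (indPart Aᶜ Q) (indPart Aᶜ P) :=
    { toFun := fun z => ⟨indPart Aᶜ z.val.val.2,
        indPart_mono Aᶜ (Prod.le_def.mp (Subtype.coe_le_coe.mpr z.2.1)).2,
        indPart_mono Aᶜ (Prod.le_def.mp (Subtype.coe_le_coe.mpr z.2.2)).2⟩,
      invFun := fun S => ⟨⟨(A, extSetoid A S.val), hemb S.val⟩,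
        Subtype.mk_le_mk.mpr (Prod.le_def.mpr ⟨le_rfl, hlo S.val S.2.1⟩),
        Subtype.mk_le_mk.mpr (Prod.le_def.mpr ⟨le_rfl, hhi S.val S.2.2⟩)⟩,
      left_inv := by
        intro z
        refine Subtype.ext (Subtype.ext (Prod.ext (hfst z.val z.2.1 z.2.2).symm ?_))
        exact ext_indPart (hblock z.val z.2.1 z.2.2).1 (hblock z.val z.2.1 z.2.2).2
      right_inv := fun S => Subtype.ext (indPart_ext S.val),
      map_rel_iff' := by
        intro z z'
        simp only [Equiv.coe_fn_mk, Subtype.mk_le_mk]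
        constructor
        · intro h
          refine Subtype.coe_le_coe.mp (Subtype.coe_le_coe.mp ?_)
          refine Prod.le_def.mpr ⟨?_, ?_⟩
          · rw [hfst z.val z.2.1 z.2.2, hfst z'.val z'.2.1 z'.2.2]
          · rw [Setoid.le_def]
            intro x y hxy
            by_cases hx : x ∈ A
            · have hy : y ∈ A := (hblock z.val z.2.1 z.2.2).2 x y hxy hx
              exact (hblock z'.val z'.2.1 z'.2.2).1 x hx y hy
            · have hy : y ∉ A := fun hy =>
                hx ((hblock z.val z.2.1 z.2.2).2 y x (Setoid.symm' _ hxy) hy)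
              have := Setoid.le_def.mp h
                ((Setoid.comap_rel (Subtype.val : ↥Aᶜ → Fin n) z.val.val.2
                  ⟨x, hx⟩ ⟨y, hy⟩).mpr hxy)
              exact (Setoid.comap_rel _ _ _ _).mp this
        · intro h
          exact indPart_mono Aᶜ (Prod.le_def.mp (Subtype.coe_le_coe.mpr
            (Subtype.coe_le_coe.mpr h))).2 }
  constructor
  · exact ⟨E⟩
  · intro mu1 mu2 hm1 hm2
    have hxy : (⟨(A, Q), hQ⟩ : Emb n) ≤ ⟨(A, P), hP⟩ := Subtype.mk_le_mk.mpr hle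
    have huv : indPart Aᶜ Q ≤ indPart Aᶜ P := indPart_mono Aᶜ hQP
    exact mobius_eq_of_orderIso mu1 mu2 hm1 hm2 hxy huv E
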